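/- Assume the L¹ spectral inequality on E holds with constant N ≥ 1. Then for every ε ∈ (0,1) there exists N' > 0 (depending only on N, ε and μ(M)) such that for all 0 ≤ s < t and all f ∈ L²(μ): ‖S_t f‖_{L²(μ)} ≤ N' e^{N'/(t−s)} ( ∫_E |S_t f| dμ )^{1−ε} ‖S_s f‖_{L²(μ)}^{ε}. -/

import Mathlib

open MeasureTheory

lemma coef_eq {H : Type*} [NormedAddCommGroup H] [InnerProductSpace ℝ H]
    (e : HilbertBasis ℕ ℝ H) (c : ℕ → ℝ) (g : H)
    (h : HasSum (fun k => c k • e k) g) (i : ℕ) : e.repr g i = c i := by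
  have horth := orthonormal_iff_ite.mp e.orthonormal
  have h1 : HasSum (fun k => ((innerSL ℝ (e i)) (c k • e k) : ℝ)) ((innerSL ℝ (e i)) g) :=
    h.mapL _
  have h2 : (fun k => ((innerSL ℝ (e i)) (c k • e k) : ℝ)) = fun k => if k = i then c i else 0 := by
    funext k
    rw [innerSL_apply_apply, real_inner_smul_right, horth i k]
    by_cases hk : k = i
    · subst hk; simp
    · simp [hk, Ne.symm hk]
  rw [h2] at h1
  have h3 := hasSum_ite_eq i (c i)
  have := h1.unique h3
  rw [e.repr_apply_apply, ← innerSL_apply_apply (𝕜 := ℝ), this]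

lemma lp_mono (a b : lp (fun _ : ℕ => ℝ) 2) (h : ∀ k, |a k| ≤ |b k|) : ‖a‖ ≤ ‖b‖ := by
  have hp : (0:ℝ) < (2 : ENNReal).toReal := by norm_num
  rw [lp.norm_eq_tsum_rpow hp, lp.norm_eq_tsum_rpow hp]
  apply Real.rpow_le_rpow (tsum_nonneg (fun i => Real.rpow_nonneg (norm_nonneg _) _))
  · apply Summable.tsum_le_tsum
    · intro k
      exact Real.rpow_le_rpow (norm_nonneg _) (h k) (by norm_num)
    · exact (memℓp_gen_iff hp).mp (lp.memℓp a)
    · exact (memℓp_gen_iff hp).mp (lp.memℓp b)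
  · norm_num

lemma L1_le_L2 {M : Type} [MeasurableSpace M] (μ : Measure M) [IsFiniteMeasure μ]
    (E : Set M) (g : Lp ℝ 2 μ) :
    ∫ x in E, |(g : Lp ℝ 2 μ) x| ∂μ ≤ (μ Set.univ).toReal ^ (1/2 : ℝ) * ‖g‖ := by
  have hint : Integrable (g : M → ℝ) μ := (Lp.memLp g).integrable (by norm_num)
  have h1 : ∫ x in E, |(g : Lp ℝ 2 μ) x| ∂μ ≤ ∫ x, |(g : Lp ℝ 2 μ) x| ∂μ :=
    setIntegral_le_integral hint.abs (Filter.Eventually.of_forall fun x => abs_nonneg _)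
  have h2 : ∫ x, |(g : Lp ℝ 2 μ) x| ∂μ = (eLpNorm (g : M → ℝ) 1 μ).toReal := by
    rw [eLpNorm_one_eq_lintegral_enorm, ← integral_norm_eq_lintegral_enorm
      (Lp.aestronglyMeasurable g)]
    simp [Real.norm_eq_abs]
  have h3 : eLpNorm (g : M → ℝ) 1 μ ≤ eLpNorm (g : M → ℝ) 2 μ * μ Set.univ ^ (1/2 : ℝ) := by
    have := eLpNorm_le_eLpNorm_mul_rpow_measure_univ (p := 1) (q := 2)
      (by norm_num) (Lp.aestronglyMeasurable g) (μ := μ)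
    norm_num at this ⊢
    exact this
  have hfin : eLpNorm (g : M → ℝ) 2 μ * μ Set.univ ^ (1/2 : ℝ) ≠ ⊤ := by
    apply ENNReal.mul_ne_top (Lp.eLpNorm_ne_top g)
    exact (ENNReal.rpow_lt_top_of_nonneg (by norm_num) (measure_ne_top μ _)).ne
  calc ∫ x in E, |(g : Lp ℝ 2 μ) x| ∂μ ≤ (eLpNorm (g : M → ℝ) 1 μ).toReal := h1.trans h2.le
    _ ≤ (eLpNorm (g : M → ℝ) 2 μ * μ Set.univ ^ (1/2 : ℝ)).toReal :=
        ENNReal.toReal_mono hfin h3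
    _ = (μ Set.univ).toReal ^ (1/2 : ℝ) * ‖g‖ := by
        rw [ENNReal.toReal_mul, ← Lp.norm_def, ← ENNReal.toReal_rpow, mul_comm]

-- contraction : ‖gt‖ ≤ ‖gs‖
lemma contraction_aux {H : Type*} [NormedAddCommGroup H] [InnerProductSpace ℝ H]
    (e : HilbertBasis ℕ ℝ H) (lam : ℕ → ℝ) (hlam : ∀ k, 0 ≤ lam k)
    (F : ℕ → ℝ) (s t : ℝ) (hst : s ≤ t) (gt gs : H)
    (hgt : HasSum (fun k => (Real.exp (-(t * lam k ^ 2)) * F k) • e k) gt)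
    (hgs : HasSum (fun k => (Real.exp (-(s * lam k ^ 2)) * F k) • e k) gs) :
    ‖gt‖ ≤ ‖gs‖ := by
  rw [← e.repr.norm_map gt, ← e.repr.norm_map gs]
  apply lp_mono
  intro k
  rw [coef_eq e _ _ hgt k, coef_eq e _ _ hgs k, abs_mul, abs_mul]
  apply mul_le_mul_of_nonneg_right _ (abs_nonneg _)
  rw [abs_of_pos (Real.exp_pos _), abs_of_pos (Real.exp_pos _)]
  apply Real.exp_le_exp.mpr
  nlinarith [sq_nonneg (lam k), hlam k]

-- tail bound : ‖gt - gP‖ ≤ exp(-(t-s)Λ²) ‖gs‖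
lemma tail_aux {H : Type*} [NormedAddCommGroup H] [InnerProductSpace ℝ H]
    (e : HilbertBasis ℕ ℝ H) (lam : ℕ → ℝ) (hlam : ∀ k, 0 ≤ lam k)
    (F : ℕ → ℝ) (s t Λ : ℝ) (hst : s ≤ t) (hΛ : 0 ≤ Λ) (gt gs gP : H)
    (hgt : HasSum (fun k => (Real.exp (-(t * lam k ^ 2)) * F k) • e k) gt)
    (hgs : HasSum (fun k => (Real.exp (-(s * lam k ^ 2)) * F k) • e k) gs)
    (hgP : HasSum (fun k => (if lam k ≤ Λ then e.repr gt k else 0) • e k) gP) :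
    ‖gt - gP‖ ≤ Real.exp (-((t - s) * Λ ^ 2)) * ‖gs‖ := by
  have hct : ∀ k, e.repr gt k = Real.exp (-(t * lam k ^ 2)) * F k := coef_eq e _ _ hgt
  have hcs : ∀ k, e.repr gs k = Real.exp (-(s * lam k ^ 2)) * F k := coef_eq e _ _ hgs
  have hcP : ∀ k, e.repr gP k = if lam k ≤ Λ then e.repr gt k else 0 := coef_eq e _ _ hgP
  have key : ‖e.repr gt - e.repr gP‖ ≤ ‖Real.exp (-((t - s) * Λ ^ 2)) • e.repr gs‖ := by
    apply lp_mono
    intro k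
    have hsub : (e.repr gt - e.repr gP) k = e.repr gt k - e.repr gP k :=
      congrFun (lp.coeFn_sub (e.repr gt) (e.repr gP)) k
    have hsmul : (Real.exp (-((t - s) * Λ ^ 2)) • e.repr gs) k
        = Real.exp (-((t - s) * Λ ^ 2)) * e.repr gs k :=
      congrFun (lp.coeFn_smul _ (e.repr gs)) k
    rw [hsub, hsmul, hcP k, hcs k, hct k]
    by_cases hk : lam k ≤ Λ
    · simp only [hk, if_true, sub_self, abs_zero]
      positivity
    · simp only [hk, if_false, sub_zero]
      rw [abs_mul, abs_mul, abs_mul, abs_of_pos (Real.exp_pos _), abs_of_pos (Real.exp_pos _),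
        abs_of_pos (Real.exp_pos _), ← mul_assoc, ← Real.exp_add]
      apply mul_le_mul_of_nonneg_right _ (abs_nonneg _)
      apply Real.exp_le_exp.mpr
      push_neg at hk
      have hΛ2 : Λ ^ 2 ≤ lam k ^ 2 := by nlinarith [hlam k]
      nlinarith [mul_le_mul_of_nonneg_left hΛ2 (sub_nonneg.mpr hst)]
  calc ‖gt - gP‖ = ‖e.repr gt - e.repr gP‖ := by rw [← map_sub, e.repr.norm_map]
    _ ≤ ‖Real.exp (-((t - s) * Λ ^ 2)) • e.repr gs‖ := key
    _ = Real.exp (-((t - s) * Λ ^ 2)) * ‖gs‖ := by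
        rw [norm_smul, Real.norm_eq_abs, abs_of_pos (Real.exp_pos _), e.repr.norm_map]

set_option maxHeartbeats 1000000 in
lemma final_arith (N m τ X Y Z ε : ℝ) (hN : 1 ≤ N) (hm0 : 0 ≤ m) (hτ : 0 < τ)
    (hε0 : 0 < ε) (hε1 : ε < 1) (hX0 : 0 ≤ X) (hY0 : 0 ≤ Y) (hZ0 : 0 ≤ Z)
    (hXZ : X ≤ Z)
    (hkey : ∀ Λ : ℝ, 0 ≤ Λ →
      X ≤ N * Real.exp (N * Λ) * Y + (1 + N * m) * (Real.exp (N * Λ - τ * Λ ^ 2) * Z)) :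
    X ≤ (N + (1 + N * m) + N ^ 2 / ε) * Real.exp ((N + (1 + N * m) + N ^ 2 / ε) / τ) *
      Y ^ (1 - ε) * Z ^ ε := by
  have hN0 : (0:ℝ) < N := lt_of_lt_of_le one_pos hN
  have hNm0 : 0 ≤ N * m := mul_nonneg hN0.le hm0
  have hBpos : (0:ℝ) < 1 + N * m := by linarith
  have hdiv0 : 0 ≤ N ^ 2 / ε := div_nonneg (sq_nonneg N) hε0.le
  set N' : ℝ := N + (1 + N * m) + N ^ 2 / ε with hN'_def
  clear_value N'
  have hN'1 : 1 ≤ N' := by rw [hN'_def]; linarith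
  have hN'0 : 0 < N' := lt_of_lt_of_le one_pos hN'1
  have hN'e : N ^ 2 ≤ N' * ε := by
    have h1 : N ^ 2 / ε ≤ N' := by rw [hN'_def]; linarith
    calc N ^ 2 = N ^ 2 / ε * ε := by field_simp
      _ ≤ N' * ε := mul_le_mul_of_nonneg_right h1 hε0.le
  rcases le_or_gt Z Y with hYZ | hYZ
  · have h1 : Z = Z ^ (1 - ε) * Z ^ ε := by
      have he : (1 - ε) + ε = 1 := by ring
      calc Z = Z ^ ((1 - ε) + ε) := by rw [he, Real.rpow_one]
        _ = Z ^ (1 - ε) * Z ^ ε := Real.rpow_add' hZ0 (by rw [he]; norm_num)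
    have h2 : Z ^ (1 - ε) ≤ Y ^ (1 - ε) := Real.rpow_le_rpow hZ0 hYZ (by linarith)
    have hP0 : 0 ≤ Y ^ (1 - ε) * Z ^ ε :=
      mul_nonneg (Real.rpow_nonneg hY0 _) (Real.rpow_nonneg hZ0 _)
    have h3 : (1:ℝ) ≤ N' * Real.exp (N' / τ) := by
      have he1 : (1:ℝ) ≤ Real.exp (N' / τ) := by
        rw [← Real.exp_zero]
        exact Real.exp_le_exp.mpr (div_nonneg hN'0.le hτ.le)
      nlinarith
    calc X ≤ Z := hXZ
      _ = Z ^ (1 - ε) * Z ^ ε := h1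
      _ ≤ Y ^ (1 - ε) * Z ^ ε := mul_le_mul_of_nonneg_right h2 (Real.rpow_nonneg hZ0 _)
      _ ≤ N' * Real.exp (N' / τ) * (Y ^ (1 - ε) * Z ^ ε) := le_mul_of_one_le_left hP0 h3
      _ = N' * Real.exp (N' / τ) * Y ^ (1 - ε) * Z ^ ε := by ring
  · have hZpos : 0 < Z := lt_of_le_of_lt hY0 hYZ
    rcases eq_or_lt_of_le hY0 with hY | hYpos
    · -- Y = 0
      have hX_le : X ≤ 0 := by
        apply le_of_forall_pos_le_add
        intro c hc
        set K : ℝ := Real.log ((1 + N * m) * Z / c) with hK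
        clear_value K
        set Λ : ℝ := max 1 ((N + max K 0) / τ) with hΛdef
        clear_value Λ
        have hΛ1 : 1 ≤ Λ := by rw [hΛdef]; exact le_max_left _ _
        have hΛ0 : 0 ≤ Λ := le_trans zero_le_one hΛ1
        have hτΛ : N + max K 0 ≤ τ * Λ := by
          have h4 := le_max_right 1 ((N + max K 0) / τ)
          calc N + max K 0 = τ * ((N + max K 0) / τ) := by field_simp
            _ ≤ τ * Λ := by rw [hΛdef]; exact mul_le_mul_of_nonneg_left h4 hτ.le
        have hexp : N * Λ - τ * Λ ^ 2 ≤ -K := by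
          have h5 : N - τ * Λ ≤ -(max K 0) := by linarith
          have h6 : N - τ * Λ ≤ 0 := le_trans h5 (neg_nonpos.mpr (le_max_right K 0))
          nlinarith [le_max_left K 0]
        have hthis := hkey Λ hΛ0
        rw [← hY] at hthis
        have heK : Real.exp (-K) * ((1 + N * m) * Z) = c := by
          rw [Real.exp_neg, hK, Real.exp_log (div_pos (mul_pos hBpos hZpos) hc)]
          field_simp
        have hb : (1 + N * m) * (Real.exp (N * Λ - τ * Λ ^ 2) * Z) ≤ c := by
          have he : Real.exp (N * Λ - τ * Λ ^ 2) ≤ Real.exp (-K) := Real.exp_le_exp.mpr hexp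
          calc (1 + N * m) * (Real.exp (N * Λ - τ * Λ ^ 2) * Z)
              ≤ (1 + N * m) * (Real.exp (-K) * Z) :=
                mul_le_mul_of_nonneg_left (mul_le_mul_of_nonneg_right he hZ0) hBpos.le
            _ = Real.exp (-K) * ((1 + N * m) * Z) := by ring
            _ = c := heK
        have h8 : X ≤ (1 + N * m) * (Real.exp (N * Λ - τ * Λ ^ 2) * Z) := by
          simpa using hthis
        linarith
      have hXzero : X = 0 := le_antisymm hX_le hX0
      rw [hXzero, ← hY, Real.zero_rpow (by intro hcon; linarith [hcon] : (1:ℝ) - ε ≠ 0)]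
      simp
    · -- 0 < Y
      have hε' : (0:ℝ) < 1 - ε := by linarith
      obtain ⟨L, hL, hlogs⟩ : ∃ L : ℝ, 0 < L ∧ L = Real.log Z - Real.log Y :=
        ⟨Real.log (Z / Y), Real.log_pos ((one_lt_div hYpos).mpr hYZ),
          Real.log_div hZpos.ne' hYpos.ne'⟩
      obtain ⟨Λ, hΛ0, hΛsq⟩ : ∃ Λ : ℝ, 0 ≤ Λ ∧ τ * Λ ^ 2 = 2 * (1 - ε) * L := by
        refine ⟨Real.sqrt (2 * (1 - ε) * L / τ), Real.sqrt_nonneg _, ?_⟩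
        rw [Real.sq_sqrt (by positivity)]
        field_simp
      have hAMGM : ∀ δ : ℝ, 0 < δ → N * Λ ≤ δ * L + N ^ 2 * (1 - ε) / (2 * δ * τ) := by
        intro δ hδ
        rw [← sub_le_iff_le_add']
        rw [le_div_iff₀ (by positivity)]
        have hq : δ ^ 2 * τ ^ 2 * Λ ^ 2 = 2 * (1 - ε) * L * (δ ^ 2 * τ) := by
          linear_combination (δ ^ 2 * τ) * hΛsq
        nlinarith [sq_nonneg (δ * τ * Λ - N * (1 - ε)), hq, hε', hL, hτ, hδ]
      have hdb1 : N ^ 2 * (1 - ε) / (2 * ε * τ) ≤ N' / τ := by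
        rw [div_le_div_iff₀ (by positivity) hτ]
        nlinarith [mul_le_mul_of_nonneg_right hN'e hτ.le,
          mul_nonneg (mul_nonneg (sq_nonneg N) hε0.le) hτ.le,
          mul_nonneg (mul_nonneg hN'0.le hε0.le) hτ.le]
      have hdb2 : N ^ 2 * (1 - ε) / (2 * (1 - ε) * τ) ≤ N' / τ := by
        rw [div_le_div_iff₀ (by positivity) hτ]
        have hN2 : N ^ 2 ≤ 2 * N' := by nlinarith [hN'e, mul_nonneg hN'0.le hε'.le]
        nlinarith [mul_le_mul_of_nonneg_right hN2 (mul_nonneg hε'.le hτ.le)]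
      have hNΛ1 : N * Λ ≤ ε * L + N' / τ := by
        have := hAMGM ε hε0
        linarith [hdb1]
      have hNΛ2 : N * Λ - τ * Λ ^ 2 ≤ -((1 - ε) * L) + N' / τ := by
        have h7 : N * Λ ≤ (1 - ε) * L + N' / τ :=
          (hAMGM (1 - ε) hε').trans (by linarith [hdb2])
        linarith [hΛsq, h7]
      have hid1 : Real.exp (ε * L) * Y = Y ^ (1 - ε) * Z ^ ε := by
        rw [Real.rpow_def_of_pos hYpos, Real.rpow_def_of_pos hZpos, ← Real.exp_add]
        conv_lhs => rw [← Real.exp_log hYpos]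
        rw [← Real.exp_add, Real.exp_eq_exp, hlogs]
        ring
      have hid2 : Real.exp (-((1 - ε) * L)) * Z = Y ^ (1 - ε) * Z ^ ε := by
        rw [Real.rpow_def_of_pos hYpos, Real.rpow_def_of_pos hZpos, ← Real.exp_add]
        conv_lhs => rw [← Real.exp_log hZpos]
        rw [← Real.exp_add, Real.exp_eq_exp, hlogs]
        ring
      have hP0 : 0 ≤ Y ^ (1 - ε) * Z ^ ε :=
        mul_nonneg (Real.rpow_nonneg hY0 _) (Real.rpow_nonneg hZ0 _)
      have hsum : N + (1 + N * m) ≤ N' := by rw [hN'_def]; linarith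
      calc X ≤ N * Real.exp (N * Λ) * Y
            + (1 + N * m) * (Real.exp (N * Λ - τ * Λ ^ 2) * Z) := hkey Λ hΛ0
        _ ≤ N * Real.exp (ε * L + N' / τ) * Y
            + (1 + N * m) * (Real.exp (-((1 - ε) * L) + N' / τ) * Z) := by
            apply add_le_add
            · exact mul_le_mul_of_nonneg_right
                (mul_le_mul_of_nonneg_left (Real.exp_le_exp.mpr hNΛ1) hN0.le) hY0
            · exact mul_le_mul_of_nonneg_left
                (mul_le_mul_of_nonneg_right (Real.exp_le_exp.mpr hNΛ2) hZ0) hBpos.le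
        _ = (N + (1 + N * m)) * Real.exp (N' / τ) * (Y ^ (1 - ε) * Z ^ ε) := by
            rw [Real.exp_add, Real.exp_add]
            linear_combination (N * Real.exp (N' / τ)) * hid1
              + ((1 + N * m) * Real.exp (N' / τ)) * hid2
        _ ≤ N' * Real.exp (N' / τ) * (Y ^ (1 - ε) * Z ^ ε) :=
            mul_le_mul_of_nonneg_right
              (mul_le_mul_of_nonneg_right hsum (Real.exp_pos _).le) hP0
        _ = N' * Real.exp (N' / τ) * Y ^ (1 - ε) * Z ^ ε := by ring

/-- if the `L¹` spectral inequality on `E` holds with constant `N ≥ 1`, then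
for every `ε ∈ (0,1)` there is `N' > 0` (depending only on `N`, `ε`, `μ(M)`) such that for
all `0 ≤ s < t` and `f ∈ L²(μ)`:
`‖S_t f‖_{L²} ≤ N' e^{N'/(t−s)} (∫_E |S_t f| dμ)^{1−ε} ‖S_s f‖_{L²}^ε`.
Here `Proj_Λ f = Σ_{λ_k ≤ Λ} ⟨f,e_k⟩ e_k` and `S_t f = Σ_k e^{−tλ_k²} ⟨f,e_k⟩ e_k` for an
orthonormal Hilbert basis `(e_k)` of `L²(μ)` and nonnegative frequencies `(λ_k)`. -/
theorem interpolation_L1 {M : Type} [MeasurableSpace M] (μ : Measure M)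
    [IsFiniteMeasure μ]
    (e : HilbertBasis ℕ ℝ (Lp ℝ 2 μ)) (lam : ℕ → ℝ) (hlam : ∀ k, 0 ≤ lam k)
    (E : Set M) (hE : MeasurableSet E)
    (Proj : ℝ → Lp ℝ 2 μ → Lp ℝ 2 μ)
    (hProj : ∀ (Λ : ℝ) (f : Lp ℝ 2 μ),
      HasSum (fun k => (if lam k ≤ Λ then e.repr f k else 0) • e k) (Proj Λ f))
    (S : ℝ → Lp ℝ 2 μ → Lp ℝ 2 μ)
    (hS : ∀ t : ℝ, 0 ≤ t → ∀ f : Lp ℝ 2 μ,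
      HasSum (fun k => (Real.exp (-(t * lam k ^ 2)) * e.repr f k) • e k) (S t f))
    (N : ℝ) (hN : 1 ≤ N)
    (hspec : ∀ Λ : ℝ, 0 ≤ Λ → ∀ f : Lp ℝ 2 μ,
      ‖Proj Λ f‖ ≤ N * Real.exp (N * Λ) * ∫ x in E, |(Proj Λ f : Lp ℝ 2 μ) x| ∂μ)
    (ε : ℝ) (hε0 : 0 < ε) (hε1 : ε < 1) :
    ∃ N' > 0, ∀ s t : ℝ, 0 ≤ s → s < t → ∀ f : Lp ℝ 2 μ,
      ‖S t f‖ ≤ N' * Real.exp (N' / (t - s)) *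
        (∫ x in E, |(S t f : Lp ℝ 2 μ) x| ∂μ) ^ (1 - ε) * ‖S s f‖ ^ ε := by
  have hN0 : (0:ℝ) < N := lt_of_lt_of_le one_pos hN
  have hm0 : 0 ≤ (μ Set.univ).toReal ^ (1/2 : ℝ) :=
    Real.rpow_nonneg ENNReal.toReal_nonneg _
  refine ⟨N + (1 + N * (μ Set.univ).toReal ^ (1/2 : ℝ)) + N ^ 2 / ε, ?_, ?_⟩
  · have h1 : 0 ≤ N ^ 2 / ε := div_nonneg (sq_nonneg N) hε0.le
    nlinarith [mul_nonneg hN0.le hm0]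
  intro s t hs hst f
  have hτ : 0 < t - s := sub_pos.mpr hst
  have ht0 : 0 ≤ t := le_trans hs hst.le
  apply final_arith N ((μ Set.univ).toReal ^ (1/2 : ℝ)) (t - s) _ _ _ ε hN hm0 hτ hε0 hε1
    (norm_nonneg _) (setIntegral_nonneg hE fun x _ => abs_nonneg _) (norm_nonneg _)
    (contraction_aux e lam hlam (fun k => e.repr f k) s t hst.le _ _
      (hS t ht0 f) (hS s hs f))
  intro Λ hΛ
  set m : ℝ := (μ Set.univ).toReal ^ (1/2 : ℝ) with hm
  set τ : ℝ := t - s with hτ_def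
  set g : Lp ℝ 2 μ := S t f with hg_def
  set X : ℝ := ‖g‖ with hX_def
  set Y : ℝ := ∫ x in E, |(g : Lp ℝ 2 μ) x| ∂μ with hY_def
  set Z : ℝ := ‖S s f‖ with hZ_def
  have hZ0 : 0 ≤ Z := norm_nonneg _
  set P : Lp ℝ 2 μ := Proj Λ g with hP_def
  have hr : ‖g - P‖ ≤ Real.exp (-(τ * Λ ^ 2)) * Z :=
    tail_aux e lam hlam (fun k => e.repr f k) s t Λ hst.le hΛ g (S s f) P
      (hS t ht0 f) (hS s hs f) (hProj Λ g)
  have hhn : ‖P‖ ≤ N * Real.exp (N * Λ) * ∫ x in E, |(P : Lp ℝ 2 μ) x| ∂μ :=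
    hspec Λ hΛ g
  have hintg : Integrable (g : M → ℝ) μ := (Lp.memLp g).integrable (by norm_num)
  have hintP : Integrable (P : M → ℝ) μ := (Lp.memLp P).integrable (by norm_num)
  have hintr : Integrable ((g - P : Lp ℝ 2 μ) : M → ℝ) μ :=
    (Lp.memLp _).integrable (by norm_num)
  have hae : ∀ᵐ x ∂μ, |(P : Lp ℝ 2 μ) x| ≤
      |(g : Lp ℝ 2 μ) x| + |((g - P : Lp ℝ 2 μ) : M → ℝ) x| := by
    filter_upwards [Lp.coeFn_sub g P] with x hx
    rw [hx, Pi.sub_apply]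
    have h1 := abs_sub ((g : Lp ℝ 2 μ) x) (((g : Lp ℝ 2 μ) x) - ((P : Lp ℝ 2 μ) x))
    simpa using h1
  have hIh : ∫ x in E, |(P : Lp ℝ 2 μ) x| ∂μ ≤ Y + m * ‖g - P‖ := by
    have step1 : ∫ x in E, |(P : Lp ℝ 2 μ) x| ∂μ ≤
        ∫ x in E, (|(g : Lp ℝ 2 μ) x| + |((g - P : Lp ℝ 2 μ) : M → ℝ) x|) ∂μ :=
      integral_mono_ae hintP.abs.restrict (hintg.abs.add hintr.abs).restrict
        (ae_restrict_of_ae hae)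
    have step2 : ∫ x in E, (|(g : Lp ℝ 2 μ) x| + |((g - P : Lp ℝ 2 μ) : M → ℝ) x|) ∂μ
        = Y + ∫ x in E, |((g - P : Lp ℝ 2 μ) : M → ℝ) x| ∂μ :=
      integral_add hintg.abs.restrict hintr.abs.restrict
    have step3 : ∫ x in E, |((g - P : Lp ℝ 2 μ) : M → ℝ) x| ∂μ ≤ m * ‖g - P‖ := by
      have := L1_le_L2 μ E (g - P)
      rw [← hm] at this
      exact this
    linarith
  have c0 : 0 ≤ N * Real.exp (N * Λ) := mul_nonneg hN0.le (Real.exp_pos _).le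
  have hm0' : 0 ≤ m := hm0
  have c1 : ‖P‖ ≤ N * Real.exp (N * Λ) * (Y + m * ‖g - P‖) :=
    hhn.trans (mul_le_mul_of_nonneg_left hIh c0)
  have c2 : N * Real.exp (N * Λ) * (m * ‖g - P‖)
      ≤ N * Real.exp (N * Λ) * (m * (Real.exp (-(τ * Λ ^ 2)) * Z)) :=
    mul_le_mul_of_nonneg_left (mul_le_mul_of_nonneg_left hr hm0') c0
  have hE1 : Real.exp (N * Λ) * Real.exp (-(τ * Λ ^ 2)) = Real.exp (N * Λ - τ * Λ ^ 2) := by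
    rw [← Real.exp_add]; ring_nf
  have c3 : N * Real.exp (N * Λ) * (m * (Real.exp (-(τ * Λ ^ 2)) * Z))
      = N * Real.exp (N * Λ) * Y + N * m * (Real.exp (N * Λ - τ * Λ ^ 2) * Z)
        - N * Real.exp (N * Λ) * Y := by
    rw [← hE1]; ring
  have hE2 : Real.exp (-(τ * Λ ^ 2)) ≤ Real.exp (N * Λ - τ * Λ ^ 2) := by
    apply Real.exp_le_exp.mpr
    nlinarith [mul_nonneg hN0.le hΛ]
  have c4 : ‖g - P‖ ≤ Real.exp (N * Λ - τ * Λ ^ 2) * Z :=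
    hr.trans (mul_le_mul_of_nonneg_right hE2 hZ0)
  have hXhP : X ≤ ‖P‖ + ‖g - P‖ := by
    calc X = ‖P + (g - P)‖ := by rw [add_sub_cancel]
      _ ≤ ‖P‖ + ‖g - P‖ := norm_add_le _ _
  linarith [c1, c2, c3, c4, hXhP]
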